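/- Let p be a prime and let F_{p^2} be the field with p^2 elements, with prime subfield F_p. For α, β ∈ F_{p^2} \ F_p, the affine quandles (F_{p^2}, α) and (F_{p^2}, β), with operations x ▷ y = (1−α)x + αy and x ▷ y = (1−β)x + βy respectively, are isomorphic as quandles if and only if β = α or β = α^p. -/

import Mathlib

/-- A binary operation is a rack operation if all left translations are bijective
and the operation is left self-distributive. -/
def IsRack {X : Type*} (op : X → X → X) : Prop :=
  (∀ x, Function.Bijective (op x)) ∧
  ∀ x y z, op x (op y z) = op (op x y) (op x z)

/-- A quandle is a rack in which every element is idempotent. -/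
def IsQuandle {X : Type*} (op : X → X → X) : Prop :=
  IsRack op ∧ ∀ x, op x x = x

/-- A rack is decomposable if it splits as a disjoint union of two nonempty
invariant subsets. -/
def IsDecomposable {X : Type*} (op : X → X → X) : Prop :=
  ∃ Y Z : Set X, Y.Nonempty ∧ Z.Nonempty ∧ Disjoint Y Z ∧ Y ∪ Z = Set.univ ∧
    (∀ x, op x '' Y = Y) ∧ (∀ x, op x '' Z = Z)

/-- Two binary operations are isomorphic as racks if there is a bijection
intertwining them. -/
def IsRackIso {X Y : Type*} (opX : X → X → X) (opY : Y → Y → Y) : Prop :=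
  ∃ f : X ≃ Y, ∀ a b, f (opX a b) = opY (f a) (f b)

/-- The affine (Alexander) quandle operation attached to an automorphism `g`
of an abelian group `A` : `x ▷ y = (x - g x) + g y`. -/
def affineOp {A : Type*} [AddCommGroup A] (g : A ≃+ A) : A → A → A :=
  fun x y => (x - g x) + g y

open Polynomial

lemma frob_fixed_mem_range (p : ℕ) [hp : Fact p.Prime] (x : GaloisField p 2)
    (h : x ^ p = x) : x ∈ Set.range (algebraMap (ZMod p) (GaloisField p 2)) := by
  classical
  let K := GaloisField p 2
  set F : K[X] := X ^ p - X with hF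
  have hdegX : (X : K[X]).degree < (X ^ p : K[X]).degree := by
    rw [degree_X, degree_X_pow]
    exact_mod_cast hp.out.one_lt
  have hdeg : F.degree = p := by
    rw [hF, degree_sub_eq_left_of_degree_lt hdegX]
    exact degree_X_pow p
  have hF0 : F ≠ 0 := by
    intro h0; rw [h0, degree_zero] at hdeg; simp at hdeg
  have hnat : F.natDegree = p := natDegree_eq_of_degree_eq_some hdeg
  have hroots : Multiset.card F.roots ≤ p := by simpa [hnat] using F.card_roots'
  set T : Finset K := Finset.univ.image (algebraMap (ZMod p) K) with hT
  have hTsub : T ⊆ F.roots.toFinset := by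
    intro y hy
    simp only [hT, Finset.mem_image] at hy
    obtain ⟨a, -, rfl⟩ := hy
    rw [Multiset.mem_toFinset, mem_roots hF0]
    simp only [hF, IsRoot, eval_sub, eval_pow, eval_X]
    rw [← map_pow, ZMod.pow_card, sub_self]
  have hTcard : T.card = p := by
    rw [hT, Finset.card_image_of_injective _ (algebraMap (ZMod p) K).injective,
      Finset.card_univ, ZMod.card]
  have hx : x ∈ F.roots.toFinset := by
    rw [Multiset.mem_toFinset, mem_roots hF0]
    simp only [hF, IsRoot, eval_sub, eval_pow, eval_X]
    rw [h, sub_self]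
  have heq : F.roots.toFinset = T := by
    apply (Finset.eq_of_subset_of_card_le hTsub ?_).symm
    rw [hTcard]
    exact le_trans (Multiset.toFinset_card_le _) hroots
  rw [heq, hT] at hx
  simp only [Finset.mem_image] at hx
  obtain ⟨a, -, ha⟩ := hx
  exact ⟨a, ha⟩

/-- For `α, β ∈ F_{p^2} \ F_p`, the affine quandles `(F_{p^2}, α)`
and `(F_{p^2}, β)` are isomorphic if and only if `β = α` or `β = α^p`. -/
theorem affine_quandle_Fpsq_iso_iff_galois_conjugate
    (p : ℕ) [hp : Fact p.Prime] (α β : GaloisField p 2)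
    (hα : α ∉ Set.range (algebraMap (ZMod p) (GaloisField p 2)))
    (hβ : β ∉ Set.range (algebraMap (ZMod p) (GaloisField p 2))) :
    IsRackIso (fun x y : GaloisField p 2 => (1 - α) * x + α * y)
        (fun x y : GaloisField p 2 => (1 - β) * x + β * y) ↔
      β = α ∨ β = α ^ p := by
  classical
  have hα0 : α ≠ 0 := fun h => hα ⟨0, by simp [h]⟩
  have hα1 : (1 : GaloisField p 2) - α ≠ 0 := by
    intro h
    exact hα ⟨1, by rw [map_one]; linear_combination h⟩
  constructor
  · rintro ⟨f, hf⟩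
    simp only at hf
    set g : GaloisField p 2 ≃ GaloisField p 2 := f.trans (Equiv.subRight (f 0)) with hgdef
    have hgapp : ∀ x, g x = f x - f 0 := fun x => rfl
    have hg0 : g 0 = 0 := by rw [hgapp, sub_self]
    have hg : ∀ a b, g ((1 - α) * a + α * b) = (1 - β) * g a + β * g b := by
      intro a b
      rw [hgapp, hgapp, hgapp, hf]
      ring
    have h1 : ∀ b, g (α * b) = β * g b := by
      intro b
      have := hg 0 b
      rw [mul_zero, zero_add, hg0, mul_zero, zero_add] at this
      exact this
    have h2 : ∀ a, g ((1 - α) * a) = (1 - β) * g a := by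
      intro a
      have := hg a 0
      rw [mul_zero, add_zero, hg0, mul_zero, add_zero] at this
      exact this
    have hadd : ∀ u v, g (u + v) = g u + g v := by
      intro u v
      have := hg (u / (1 - α)) (v / α)
      rw [mul_div_cancel₀ _ hα1, mul_div_cancel₀ _ hα0, ← h2, ← h1,
        mul_div_cancel₀ _ hα1, mul_div_cancel₀ _ hα0] at this
      exact this
    set G : GaloisField p 2 →+ GaloisField p 2 := AddMonoidHom.mk' g hadd with hGdef
    have hsmul : ∀ (c : ZMod p) (x : GaloisField p 2), g (c • x) = c • g x := by
      intro c x
      exact ZMod.map_smul G c x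
    have hpow : ∀ (n : ℕ) (x : GaloisField p 2), g (α ^ n * x) = β ^ n * g x := by
      intro n
      induction n with
      | zero => intro x; simp
      | succ n ih =>
          intro x
          rw [pow_succ, pow_succ, mul_comm (α ^ n) α, mul_assoc, h1, ih, mul_comm (β ^ n) β,
            mul_assoc]
    have hq : ∀ (q : (ZMod p)[X]) (x : GaloisField p 2),
        g (aeval α q * x) = aeval β q * g x := by
      intro q
      induction q using Polynomial.induction_on' with
      | add q r hq hr =>
          intro x
          rw [map_add, map_add, add_mul, add_mul, hadd, hq, hr]
      | monomial n a =>
          intro x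
          rw [aeval_monomial, aeval_monomial, mul_assoc, mul_assoc, ← Algebra.smul_def,
            ← Algebra.smul_def, hsmul, hpow]
    -- minimal polynomial argument
    have hint : IsIntegral (ZMod p) α := IsIntegral.of_finite (ZMod p) α
    have hg1 : g 1 ≠ 0 := by
      intro h
      have := g.injective (h.trans hg0.symm)
      exact one_ne_zero this
    have hβroot : aeval β (minpoly (ZMod p) α) = 0 := by
      have := hq (minpoly (ZMod p) α) 1
      rw [minpoly.aeval, zero_mul, hg0] at this
      rcases mul_eq_zero.mp this.symm with h | h
      · exact h
      · exact absurd h hg1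
    have hdeg2 : (minpoly (ZMod p) α).natDegree = 2 := by
      have hle : (minpoly (ZMod p) α).natDegree ≤ 2 := by
        have := minpoly.natDegree_le (A := ZMod p) α
        rwa [GaloisField.finrank p two_ne_zero] at this
      have hge : 2 ≤ (minpoly (ZMod p) α).natDegree :=
        (minpoly.two_le_natDegree_iff hint).mpr hα
      omega
    set M : (GaloisField p 2)[X] := (minpoly (ZMod p) α).map (algebraMap (ZMod p) _) with hM
    have hMmonic : M.Monic := (minpoly.monic hint).map _
    have hM0 : M ≠ 0 := hMmonic.ne_zero
    have hMdeg : M.natDegree = 2 := by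
      rw [hM, natDegree_map, hdeg2]
    have hMα : M.eval α = 0 := by
      rw [hM, eval_map, ← aeval_def, minpoly.aeval]
    have hMβ : M.eval β = 0 := by
      rw [hM, eval_map, ← aeval_def, hβroot]
    have hMfix : M.map (frobenius (GaloisField p 2) p) = M := by
      ext n
      rw [coeff_map, hM, coeff_map]
      rw [frobenius_def, ← map_pow, ZMod.pow_card]
    have hMαp : M.eval (α ^ p) = 0 := by
      have : (M.map (frobenius (GaloisField p 2) p)).eval (frobenius (GaloisField p 2) p α)
          = frobenius (GaloisField p 2) p (M.eval α) := by
        rw [eval_map, eval₂_hom]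
      rw [hMfix, hMα, map_zero] at this
      rwa [frobenius_def] at this
    have hαp : α ^ p ≠ α := by
      intro h
      exact hα (frob_fixed_mem_range p α h)
    -- factor out (X - C α)
    obtain ⟨q, hq'⟩ := dvd_iff_isRoot.mpr hMα
    have hq0 : q ≠ 0 := by
      intro h; rw [h, mul_zero] at hq'; exact hM0 hq'
    have hqdeg : q.natDegree = 1 := by
      have := hMdeg
      rw [hq', natDegree_mul (X_sub_C_ne_zero α) hq0, natDegree_X_sub_C] at this
      omega
    obtain ⟨a, ha, b, hab⟩ := natDegree_eq_one.mp hqdeg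
    have evalq : ∀ γ : GaloisField p 2, M.eval γ = (γ - α) * (a * γ + b) := by
      intro γ
      rw [hq', eval_mul, eval_sub, eval_X, eval_C, ← hab]
      simp
    have hqαp : a * α ^ p + b = 0 := by
      have := hMαp
      rw [evalq] at this
      rcases mul_eq_zero.mp this with h | h
      · exact absurd (sub_eq_zero.mp h) hαp
      · exact h
    have := hMβ
    rw [evalq] at this
    rcases mul_eq_zero.mp this with h | h
    · exact Or.inl (sub_eq_zero.mp h)
    · right
      have : a * (β - α ^ p) = 0 := by linear_combination h - hqαp
      rcases mul_eq_zero.mp this with h' | h'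
      · exact absurd h' ha
      · exact sub_eq_zero.mp h'
  · rintro (rfl | rfl)
    · exact ⟨Equiv.refl _, fun a b => rfl⟩
    · refine ⟨(frobeniusEquiv (GaloisField p 2) p).toEquiv, fun a b => ?_⟩
      simp only [RingEquiv.toEquiv_eq_coe, EquivLike.coe_coe, frobeniusEquiv_apply]
      rw [frobenius_def, frobenius_def, frobenius_def]
      rw [add_pow_char, mul_pow, mul_pow, sub_pow_char, one_pow]
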